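/- Let n ≥ 2 and consider the star graph S_n. Define f : V(S_n) → ℝ by f(a_1) = 2 and f(a_i) = 1 for all 2 ≤ i ≤ n, and define g : V(S_n) → ℝ by g = f − 3 (pointwise). Then Var_1(f − g) = 0, while Var_1(M_{S_n} f − M_{S_n} g) ≥ 1/2 + 1/n. Consequently, the continuity in the previous sense of f ↦ M_{S_n} f with respect to the p-variation seminorm fails without the assumption that min_{x∈V} |f(x) − f_j(x)| → 0. -/

import Mathlib

open scoped Classical

/-- The ball of radius `r` around `e` in the graph metric of `G`
(only vertices reachable from `e` are at finite distance). -/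
noncomputable def gball {V : Type*} [Fintype V] (G : SimpleGraph V) (e : V) (r : ℕ) :
    Finset V :=
  Finset.univ.filter fun m => G.Reachable e m ∧ G.dist e m ≤ r

/-- The centered Hardy–Littlewood maximal function on a finite graph. -/
noncomputable def mxHL {V : Type*} [Fintype V] (G : SimpleGraph V) (f : V → ℝ) (e : V) : ℝ :=
  ⨆ r : ℕ, (1 / ((gball G e r).card : ℝ)) * ∑ m ∈ gball G e r, |f m|

/-- The fractional centered Hardy–Littlewood maximal function on a finite graph. -/
noncomputable def mxFr {V : Type*} [Fintype V] (G : SimpleGraph V) (α : ℝ) (f : V → ℝ)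
    (e : V) : ℝ :=
  ⨆ r : ℕ, ((gball G e r).card : ℝ) ^ (α - 1) * ∑ m ∈ gball G e r, |f m|

/-- The `p`-variation of `f : V → ℝ` with respect to the graph `G`
(vertices at distance `1` are exactly the adjacent ones). -/
noncomputable def vp {V : Type*} [Fintype V] (G : SimpleGraph V) (p : ℝ) (f : V → ℝ) : ℝ :=
  ((1 / 2) * ∑ v : V, ∑ w : V, if G.Adj v w then |f v - f w| ^ p else 0) ^ (1 / p)

/-- The star graph on `Fin n`, with center the vertex with value `0`. -/
def starG (n : ℕ) : SimpleGraph (Fin n) where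
  Adj v w := v ≠ w ∧ (v.val = 0 ∨ w.val = 0)
  symm := ⟨fun _ _ h => ⟨h.1.symm, h.2.symm⟩⟩
  loopless := ⟨fun _ h => h.1 rfl⟩

/-- The `ℓ²` norm of a function on a finite vertex set. -/
noncomputable def nrm2 {V : Type*} [Fintype V] (g : V → ℝ) : ℝ :=
  Real.sqrt (∑ v : V, g v ^ 2)

/- ## Auxiliary lemmas -/

lemma myiSup_eq (h : ℕ → ℝ) (M : ℝ) (hub : ∀ r, h r ≤ M) {r0 : ℕ} (h0 : h r0 = M) :
    (⨆ r, h r) = M :=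
  le_antisymm (ciSup_le hub)
    (h0 ▸ le_ciSup ⟨M, by rintro x ⟨r, rfl⟩; exact hub r⟩ r0)

lemma starG_reachable {n : ℕ} (hn : 0 < n) (v w : Fin n) : (starG n).Reachable v w := by
  have key : ∀ u : Fin n, (starG n).Reachable u ⟨0, hn⟩ := by
    intro u
    by_cases h : u = ⟨0, hn⟩
    · exact h ▸ SimpleGraph.Reachable.refl _
    · exact SimpleGraph.Adj.reachable ⟨h, Or.inr rfl⟩
  exact (key v).trans (key w).symm

lemma gball_zero {V : Type*} [Fintype V] (G : SimpleGraph V) (e : V) :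
    gball G e 0 = {e} := by
  ext m
  simp only [gball, Finset.mem_filter, Finset.mem_univ, true_and, Finset.mem_singleton,
    Nat.le_zero]
  constructor
  · rintro ⟨hr, hd⟩
    exact (hr.dist_eq_zero_iff.mp hd).symm
  · rintro rfl
    exact ⟨SimpleGraph.Reachable.refl _, by simp [SimpleGraph.dist_self]⟩

lemma gball_center {n : ℕ} (hn : 0 < n) {r : ℕ} (hr : 1 ≤ r) :
    gball (starG n) ⟨0, hn⟩ r = Finset.univ := by
  ext m
  simp only [gball, Finset.mem_filter, Finset.mem_univ, true_and, iff_true]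
  refine ⟨starG_reachable hn _ _, ?_⟩
  by_cases h : m = ⟨0, hn⟩
  · subst h; simp [SimpleGraph.dist_self]
  · calc (starG n).dist ⟨0, hn⟩ m ≤ 1 :=
          le_of_eq (SimpleGraph.dist_eq_one_iff_adj.mpr ⟨Ne.symm h, Or.inl rfl⟩)
      _ ≤ r := hr

lemma gball_leaf_one {n : ℕ} (hn : 0 < n) {e : Fin n} (he : e ≠ ⟨0, hn⟩) :
    gball (starG n) e 1 = {e, ⟨0, hn⟩} := by
  have heval : e.val ≠ 0 := fun h => he (Fin.ext h)
  ext m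
  simp only [gball, Finset.mem_filter, Finset.mem_univ, true_and, Finset.mem_insert,
    Finset.mem_singleton]
  constructor
  · rintro ⟨hr, hd⟩
    interval_cases hdd : (starG n).dist e m
    · exact Or.inl (hr.dist_eq_zero_iff.mp hdd).symm
    · have hadj := SimpleGraph.dist_eq_one_iff_adj.mp hdd
      rcases hadj.2 with h0 | h0
      · exact absurd h0 heval
      · exact Or.inr (Fin.ext h0)
  · rintro (rfl | rfl)
    · exact ⟨SimpleGraph.Reachable.refl _, by simp [SimpleGraph.dist_self]⟩
    · refine ⟨starG_reachable hn _ _, ?_⟩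
      exact le_of_eq (SimpleGraph.dist_eq_one_iff_adj.mpr ⟨he, Or.inr rfl⟩)

lemma gball_leaf_big {n : ℕ} (hn : 0 < n) {e : Fin n} (he : e ≠ ⟨0, hn⟩) {r : ℕ} (hr : 2 ≤ r) :
    gball (starG n) e r = Finset.univ := by
  have heval : e.val ≠ 0 := fun h => he (Fin.ext h)
  ext m
  simp only [gball, Finset.mem_filter, Finset.mem_univ, true_and, iff_true]
  refine ⟨starG_reachable hn _ _, ?_⟩
  by_cases h1 : m = e
  · subst h1; simp [SimpleGraph.dist_self]
  by_cases h2 : m = ⟨0, hn⟩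
  · subst h2
    calc (starG n).dist e ⟨0, hn⟩ ≤ 1 :=
          le_of_eq (SimpleGraph.dist_eq_one_iff_adj.mpr ⟨he, Or.inr rfl⟩)
      _ ≤ r := by omega
  · refine le_trans
      (SimpleGraph.dist_le
        (SimpleGraph.Walk.cons (⟨he, Or.inr rfl⟩ : (starG n).Adj e ⟨0, hn⟩)
          (SimpleGraph.Walk.cons (⟨fun hh => h2 hh.symm, Or.inl rfl⟩ : (starG n).Adj ⟨0, hn⟩ m)
            SimpleGraph.Walk.nil))) ?_
    exact hr

lemma sum_if_fin {n : ℕ} (c : Fin n) (a b : ℝ) :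
    ∑ v : Fin n, (if v = c then a else b) = a - b + n * b := by
  have h : ∀ v : Fin n, (if v = c then a else b) = (if v = c then a - b else 0) + b := by
    intro v; split <;> ring
  simp_rw [h]
  rw [Finset.sum_add_distrib, Finset.sum_ite_eq' Finset.univ c fun _ => a - b]
  simp [Finset.card_univ, mul_comm]

/-- counterexample showing that continuity of `f ↦ M_{S_n} f` with respect
to the `p`-variation seminorm fails without the assumption `min_x |f x - f_j x| → 0`. -/
theorem starGraph_maximal_not_continuous_seminorm (n : ℕ) (hn : 2 ≤ n)
    (f g : Fin n → ℝ)
    (hf : f = fun v => if v = ⟨0, by omega⟩ then (2 : ℝ) else 1)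
    (hg : g = fun v => f v - 3) :
    vp (starG n) 1 (fun v => f v - g v) = 0 ∧
    1 / 2 + 1 / (n : ℝ) ≤
      vp (starG n) 1 (fun v => mxHL (starG n) f v - mxHL (starG n) g v) := by
  have hn0 : 0 < n := by omega
  have hnR : (2 : ℝ) ≤ n := by exact_mod_cast hn
  have hnpos : (0 : ℝ) < n := by linarith
  set c : Fin n := ⟨0, hn0⟩ with hc
  -- basic values
  have hfv : ∀ v, f v = if v = c then (2 : ℝ) else 1 := by
    intro v; rw [hf]
  have habsf : ∀ v, |f v| = if v = c then (2 : ℝ) else 1 := by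
    intro v; rw [hfv]; split <;> norm_num
  have habsg : ∀ v, |g v| = if v = c then (1 : ℝ) else 2 := by
    intro v; rw [hg]; simp only; rw [hfv]; split <;> norm_num
  -- sums
  have hsumf_univ : ∑ m : Fin n, |f m| = (n : ℝ) + 1 := by
    simp_rw [habsf]; rw [sum_if_fin]; ring
  have hsumg_univ : ∑ m : Fin n, |g m| = 2 * (n : ℝ) - 1 := by
    simp_rw [habsg]; rw [sum_if_fin]; ring
  have hcard_univ : ((Finset.univ : Finset (Fin n)).card : ℝ) = n := by
    simp [Finset.card_univ]
  have hnne : (n : ℝ) ≠ 0 := ne_of_gt hnpos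
  have h1n2 : (1:ℝ)/n ≤ 1/2 := by
    rw [div_le_div_iff₀ hnpos (by norm_num : (0:ℝ) < 2)]; linarith
  have hgc_eq : (1:ℝ)/n * (2*(n:ℝ)-1) = 2 - 1/n := by field_simp
  -- maximal function at the center
  have hMfc : mxHL (starG n) f c = 2 := by
    unfold mxHL
    refine myiSup_eq _ _ ?_ (r0 := 0) ?_
    · intro r
      rcases r with _ | r
      · rw [gball_zero, Finset.card_singleton, Nat.cast_one, Finset.sum_singleton, habsf,
          if_pos rfl]
        norm_num
      · rw [hc, gball_center hn0 (by omega), hcard_univ, hsumf_univ,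
          div_mul_eq_mul_div, div_le_iff₀ hnpos]
        linarith
    · rw [gball_zero, Finset.card_singleton, Nat.cast_one, Finset.sum_singleton, habsf,
        if_pos rfl]
      norm_num
  have hMgc : mxHL (starG n) g c = 2 - 1 / n := by
    unfold mxHL
    refine myiSup_eq _ _ ?_ (r0 := 1) ?_
    · intro r
      rcases r with _ | r
      · rw [gball_zero, Finset.card_singleton, Nat.cast_one, Finset.sum_singleton, habsg,
          if_pos rfl]
        linarith
      · rw [hc, gball_center hn0 (by omega), hcard_univ, hsumg_univ, hgc_eq]
    · rw [hc, gball_center hn0 (by omega), hcard_univ, hsumg_univ, hgc_eq]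
  -- maximal function at a leaf
  have hMfl : ∀ e : Fin n, e ≠ c → mxHL (starG n) f e = 3 / 2 := by
    intro e he
    have hsum2 : ∑ m ∈ ({e, c} : Finset (Fin n)), |f m| = 3 := by
      rw [Finset.sum_pair he, habsf, habsf, if_neg he, if_pos rfl]; norm_num
    unfold mxHL
    refine myiSup_eq _ _ ?_ (r0 := 1) ?_
    · intro r
      rcases r with _ | _ | r
      · rw [gball_zero, Finset.card_singleton, Nat.cast_one, Finset.sum_singleton, habsf,
          if_neg he]
        norm_num
      · rw [gball_leaf_one hn0 he, hsum2, Finset.card_pair he]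
        norm_num
      · rw [gball_leaf_big hn0 he (by omega), hcard_univ, hsumf_univ,
          div_mul_eq_mul_div, div_le_iff₀ hnpos]
        linarith
    · rw [gball_leaf_one hn0 he, hsum2, Finset.card_pair he]
      norm_num
  have hMgl : ∀ e : Fin n, e ≠ c → mxHL (starG n) g e = 2 := by
    intro e he
    have hsum2 : ∑ m ∈ ({e, c} : Finset (Fin n)), |g m| = 3 := by
      rw [Finset.sum_pair he, habsg, habsg, if_neg he, if_pos rfl]; norm_num
    unfold mxHL
    refine myiSup_eq _ _ ?_ (r0 := 0) ?_
    · intro r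
      rcases r with _ | _ | r
      · rw [gball_zero, Finset.card_singleton, Nat.cast_one, Finset.sum_singleton, habsg,
          if_neg he]
        norm_num
      · rw [gball_leaf_one hn0 he, hsum2, Finset.card_pair he]
        norm_num
      · rw [gball_leaf_big hn0 he (by omega), hcard_univ, hsumg_univ,
          div_mul_eq_mul_div, div_le_iff₀ hnpos]
        linarith
    · rw [gball_zero, Finset.card_singleton, Nat.cast_one, Finset.sum_singleton, habsg,
        if_neg he]
      norm_num
  constructor
  · -- first part: Var (f - g) = 0
    have h3 : (fun v => f v - g v) = fun _ : Fin n => (3 : ℝ) := by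
      funext v; rw [hg]; ring
    rw [h3]
    unfold vp
    norm_num [Real.rpow_one]
  · -- second part
    set d : ℝ := 1 / 2 + 1 / n with hd
    have hdpos : 0 < d := by
      rw [hd]; positivity
    have hterm : ∀ v w : Fin n,
        (if (starG n).Adj v w
          then |(fun v => mxHL (starG n) f v - mxHL (starG n) g v) v -
                (fun v => mxHL (starG n) f v - mxHL (starG n) g v) w| ^ (1 : ℝ) else 0)
          = if (v = c ∧ w ≠ c) ∨ (w = c ∧ v ≠ c) then d else 0 := by
      intro v w
      by_cases hv : v = c <;> by_cases hw : w = c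
      · subst hv; subst hw
        have hna : ¬ (starG n).Adj c c := fun h => h.1 rfl
        rw [if_neg hna, if_neg (by tauto)]
      · subst hv
        have ha : (starG n).Adj c w := ⟨fun h => hw h.symm, Or.inl rfl⟩
        rw [if_pos ha, if_pos (Or.inl ⟨rfl, hw⟩)]
        dsimp only
        rw [hMfc, hMgc, hMfl w hw, hMgl w hw, Real.rpow_one]
        have h1n : (0:ℝ) < 1 / n := by positivity
        rw [abs_of_nonneg (by linarith)]
        rw [hd]; ring
      · subst hw
        have ha : (starG n).Adj v c := ⟨hv, Or.inr rfl⟩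
        rw [if_pos ha, if_pos (Or.inr ⟨rfl, hv⟩)]
        dsimp only
        rw [hMfc, hMgc, hMfl v hv, hMgl v hv, Real.rpow_one]
        have h1n : (0:ℝ) < 1 / n := by positivity
        rw [abs_of_nonpos (by linarith)]
        rw [hd]; ring
      · have hna : ¬ (starG n).Adj v w := by
          rintro ⟨-, h0 | h0⟩
          · exact hv (Fin.ext h0)
          · exact hw (Fin.ext h0)
        rw [if_neg hna, if_neg (by tauto)]
    have hinner : ∀ v : Fin n,
        (∑ w : Fin n, if (v = c ∧ w ≠ c) ∨ (w = c ∧ v ≠ c) then d else 0)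
          = if v = c then (n : ℝ) * d - d else d := by
      intro v
      by_cases hv : v = c
      · subst hv
        rw [if_pos rfl]
        have h2 : ∀ w : Fin n, (if (c = c ∧ w ≠ c) ∨ (w = c ∧ c ≠ c) then d else 0)
            = if w = c then 0 else d := by
          intro w
          by_cases hw : w = c
          · subst hw; simp
          · simp [hw]
        rw [Finset.sum_congr rfl fun w _ => h2 w, sum_if_fin]; ring
      · rw [if_neg hv]
        have h2 : ∀ w : Fin n, (if (v = c ∧ w ≠ c) ∨ (w = c ∧ v ≠ c) then d else 0)
            = if w = c then d else 0 := by
          intro w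
          by_cases hw : w = c
          · subst hw; simp [hv]
          · simp [hw, hv]
        rw [Finset.sum_congr rfl fun w _ => h2 w, sum_if_fin]; ring
    unfold vp
    simp_rw [hterm, hinner]
    rw [sum_if_fin]
    have h11 : (1 : ℝ) / 1 = 1 := by norm_num
    rw [h11, Real.rpow_one]
    have heq : (1:ℝ)/2 * ((n:ℝ) * d - d - d + n * d) = ((n:ℝ) - 1) * d := by ring
    rw [heq]
    have hgoal : d ≤ ((n:ℝ) - 1) * d := by nlinarith
    calc (1:ℝ)/2 + 1/n = d := by rw [hd]
      _ ≤ _ := hgoal
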